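/- Let P be a convex polyomino whose bounding box is the rectangle with vertex set [(0,0),(m,n)], and assume (0,0) ∈ V(P) and (m,n) ∈ V(P). Then V(P) is a sublattice of ℕ²: for any two a, b ∈ V(P), the componentwise maximum a ∨ b and the componentwise minimum a ∧ b belong to V(P). Moreover V(P) is a simple planar distributive lattice. -/
import Mathlib


open scoped Classical

/-- Lattice points of `ℕ²`; a cell is identified with its lower-left corner. -/
abbrev Pt : Type := ℕ × ℕ

/-- The four vertices (corners) of the unit cell with lower-left corner `a`. -/
def cellVerts (a : Pt) : Finset Pt :=
  {a, (a.1 + 1, a.2), (a.1, a.2 + 1), (a.1 + 1, a.2 + 1)}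

/-- The vertex set `V(P)` of a collection of cells. -/
def vertexSet (P : Finset Pt) : Finset Pt := P.biUnion cellVerts

/-- Two cells share an edge. -/
def cellAdj (a b : Pt) : Prop :=
  (a.1 = b.1 ∧ (a.2 = b.2 + 1 ∨ b.2 = a.2 + 1)) ∨
  (a.2 = b.2 ∧ (a.1 = b.1 + 1 ∨ b.1 = a.1 + 1))

/-- Any two cells of `S` are joined by a sequence of edge-adjacent cells of `S`. -/
def CellConnected (S : Set Pt) : Prop :=
  ∀ a ∈ S, ∀ b ∈ S,
    Relation.ReflTransGen (fun x y => cellAdj x y ∧ x ∈ S ∧ y ∈ S) a b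

/-- A polyomino: a nonempty, edge-connected finite collection of cells. -/
def IsPolyomino (P : Finset Pt) : Prop :=
  P.Nonempty ∧ CellConnected (↑P : Set Pt)

/-- A simple polyomino: the cells of `ℕ²` outside of `P` are also edge-connected. -/
def IsSimplePolyomino (P : Finset Pt) : Prop :=
  IsPolyomino P ∧ CellConnected ((↑P : Set Pt)ᶜ)

/-- The cells of the interval `[a, b]` of `ℕ²`. -/
def intervalCells (a b : Pt) : Finset Pt :=
  Finset.Ico a.1 b.1 ×ˢ Finset.Ico a.2 b.2

/-- `[a, b]` is a proper interval all of whose cells belong to `P`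
(an inner interval, also called a rectangle of `P`). -/
def IsInnerInterval (P : Finset Pt) (a b : Pt) : Prop :=
  a.1 < b.1 ∧ a.2 < b.2 ∧ intervalCells a b ⊆ P

/-- The ideal of inner 2-minors of a collection of cells `P`, in the polynomial
ring whose variables are indexed by a finite vertex set `V`. -/
noncomputable def innerMinorIdeal (K : Type*) [Field K] (V P : Finset Pt) :
    Ideal (MvPolynomial {v : Pt // v ∈ V} K) :=
  Ideal.span { f | ∃ a b c d : {v : Pt // v ∈ V},
    IsInnerInterval P a.1 b.1 ∧
    c.1 = ((a.1).1, (b.1).2) ∧ d.1 = ((b.1).1, (a.1).2) ∧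
    f = MvPolynomial.X a * MvPolynomial.X b - MvPolynomial.X c * MvPolynomial.X d }

/-- The polyomino ideal `I_P ⊆ K[x_v : v ∈ V(P)]`. -/
noncomputable def polyoIdeal (K : Type*) [Field K] (P : Finset Pt) :
    Ideal (MvPolynomial {v : Pt // v ∈ vertexSet P} K) :=
  innerMinorIdeal K (vertexSet P) P

/-- The join-meet ideal of a finite sublattice `L` of `ℕ²`. -/
noncomputable def joinMeetIdeal (K : Type*) [Field K] (L : Finset Pt) :
    Ideal (MvPolynomial {v : Pt // v ∈ L} K) :=
  Ideal.span { f | ∃ a b c d : {v : Pt // v ∈ L},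
    ¬ a.1 ≤ b.1 ∧ ¬ b.1 ≤ a.1 ∧ c.1 = a.1 ⊔ b.1 ∧ d.1 = a.1 ⊓ b.1 ∧
    f = MvPolynomial.X a * MvPolynomial.X b - MvPolynomial.X c * MvPolynomial.X d }

/-- A saturated chain in `L` from `a` to `b` whose consecutive elements differ by
`(1,0)` or `(0,1)`. -/
def UnitChain (L : Finset Pt) (a b : Pt) : Prop :=
  ∃ (k : ℕ) (c : ℕ → Pt), c 0 = a ∧ c k = b ∧ (∀ i ≤ k, c i ∈ L) ∧
    ∀ i < k, c (i + 1) = c i + (1, 0) ∨ c (i + 1) = c i + (0, 1)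

/-- The rank of a finite sublattice of `ℕ²` (whose minimum is `(0,0)`). -/
def latRank (L : Finset Pt) : ℕ := L.sup fun a => a.1 + a.2

/-- A simple planar distributive lattice: a finite sublattice of `ℕ²` containing
`(0,0)`, in which any two comparable elements are joined by a saturated chain of unit
steps, and having at least two elements in each intermediate rank. -/
def IsSPDL (L : Finset Pt) : Prop :=
  (0, 0) ∈ L ∧
  (∀ a ∈ L, ∀ b ∈ L, a ⊔ b ∈ L ∧ a ⊓ b ∈ L) ∧
  (∀ a ∈ L, ∀ b ∈ L, a ≤ b → UnitChain L a b) ∧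
  ∀ r : ℕ, 0 < r → r < latRank L → 2 ≤ (L.filter fun a => a.1 + a.2 = r).card

/-- The cells all of whose four vertices lie in `L`. -/
def cellsOf (L : Finset Pt) : Finset Pt := L.filter fun a => cellVerts a ⊆ L

/-- A north-east lattice path of length `k` starting at the origin. -/
def IsNEPath (k : ℕ) (f : ℕ → Pt) : Prop :=
  f 0 = (0, 0) ∧ ∀ i < k, f (i + 1) = f i + (1, 0) ∨ f (i + 1) = f i + (0, 1)

/-- `P` is the parallelogram polyomino bounded above by the path `u` and below by
the path `l`, both of length `k`, meeting only at their endpoints. -/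
def ParaData (P : Finset Pt) (k : ℕ) (u l : ℕ → Pt) : Prop :=
  0 < k ∧ IsNEPath k u ∧ IsNEPath k l ∧ u k = l k ∧
  (∀ i ≤ k, (u i).1 ≤ (l i).1) ∧
  (∀ i, 0 < i → i < k → u i ≠ l i) ∧
  P.Nonempty ∧
  ∀ c : Pt, c ∈ P ↔
    ∀ v ∈ cellVerts c, v.1 + v.2 ≤ k ∧ (u (v.1 + v.2)).1 ≤ v.1 ∧ v.1 ≤ (l (v.1 + v.2)).1

/-- A parallelogram polyomino. -/
def IsParaPoly (P : Finset Pt) : Prop := ∃ k u l, ParaData P k u l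

/-- `F` is a set of non-attacking rooks on `P`. -/
def NonAttacking (P : Finset Pt) (F : Finset Pt) : Prop :=
  F ⊆ P ∧ ∀ a ∈ F, ∀ b ∈ F, a ≠ b → a.1 ≠ b.1 ∧ a.2 ≠ b.2

/-- A switch: inside a rectangle `[a,b]` of `P`, replace the diagonal pair of cells by
the antidiagonal pair, or vice versa. -/
def SwitchStep (P : Finset Pt) (F G : Finset Pt) : Prop :=
  ∃ a b : Pt, IsInnerInterval P a b ∧
    ((a ∈ F ∧ (b.1 - 1, b.2 - 1) ∈ F ∧
       G = F \ {a, (b.1 - 1, b.2 - 1)} ∪ {(a.1, b.2 - 1), (b.1 - 1, a.2)}) ∨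
     ((a.1, b.2 - 1) ∈ F ∧ (b.1 - 1, a.2) ∈ F ∧
       G = F \ {(a.1, b.2 - 1), (b.1 - 1, a.2)} ∪ {a, (b.1 - 1, b.2 - 1)}))

/-- The number `|R̃_k|` of equivalence classes (under finitely many switches) of sets of
`k` non-attacking rooks on `P`. -/
noncomputable def rtilde (P : Finset Pt) (k : ℕ) : ℕ :=
  Nat.card (Quot fun F G : {F : Finset Pt // NonAttacking P F ∧ F.card = k} =>
    SwitchStep P F.1 G.1)

/-- The rook number `r(P)`: the maximum number of non-attacking rooks on `P`. -/
noncomputable def rookNum (P : Finset Pt) : ℕ :=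
  (P.powerset.filter fun F => NonAttacking P F).sup Finset.card

/-- The Hilbert function of `K[P] = K[x_v : v ∈ V(P)]/I_P`. -/
noncomputable def hilbertFn (K : Type*) [Field K] (P : Finset Pt) (k : ℕ) : ℕ :=
  Module.finrank K
    ↥(Submodule.map (Ideal.Quotient.mkₐ K (polyoIdeal K P)).toLinearMap
      (MvPolynomial.homogeneousSubmodule {v : Pt // v ∈ vertexSet P} K k))

/-- The Hilbert–Poincaré series of `K[P]`, as a formal power series over `ℤ`. -/
noncomputable def hilbertSeries (K : Type*) [Field K] (P : Finset Pt) : PowerSeries ℤ :=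
  PowerSeries.mk fun k => (hilbertFn K P k : ℤ)

/-- `[a,b]` is a maximal rectangle of `P`. -/
def MaximalRect (P : Finset Pt) (a b : Pt) : Prop :=
  IsInnerInterval P a b ∧
  ∀ a' b', IsInnerInterval P a' b' → a' ≤ a → b ≤ b' → a' = a ∧ b' = b

/-- The rectangle `[sa,sb]` of `P` is a single rectangle whose unique maximal rectangle
is `[ra,rb]`: it is contained in `[ra,rb]` and shares no cell with any other maximal
rectangle of `P`. -/
def SingleRectOf (P : Finset Pt) (ra rb sa sb : Pt) : Prop :=
  IsInnerInterval P sa sb ∧ ra ≤ sa ∧ sb ≤ rb ∧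
  ∀ ra' rb', MaximalRect P ra' rb' → ¬(ra' = ra ∧ rb' = rb) →
    ∀ c ∈ intervalCells sa sb, c ∉ intervalCells ra' rb'

/-- `P` has the S-property: every maximal rectangle of `P` has a unique single square. -/
def HasSProperty (P : Finset Pt) : Prop :=
  ∀ ra rb, MaximalRect P ra rb →
    ∃! s : Pt × Pt,
      SingleRectOf P ra rb s.1 s.2 ∧ s.2.1 - s.1.1 = s.2.2 - s.1.2

/-- `P` is shortenable: removing the unique maximal rectangle `R₀` containing `(0,0)`
leaves (up to translation) a parallelogram polyomino. -/
def Shortenable (P : Finset Pt) : Prop :=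
  ∃ b₀, MaximalRect P (0, 0) b₀ ∧
    ∃ (w : Pt) (Q : Finset Pt), IsParaPoly Q ∧
      P \ intervalCells (0, 0) b₀ = Q.image fun c => c + w

/-- `P` is well-shortenable: it is shortenable, and `P ∖ R₀` is (up to translation)
either a rectangle or again a well-shortenable parallelogram polyomino. -/
inductive WellShortenable : Finset Pt → Prop
  | base (P : Finset Pt) (b₀ : Pt) (hmax : MaximalRect P (0, 0) b₀)
      (w : Pt) (Q : Finset Pt) (hQ : IsParaPoly Q)
      (heq : P \ intervalCells (0, 0) b₀ = Q.image fun c => c + w)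
      (hrect : ∃ a b : Pt, Q = intervalCells a b) : WellShortenable P
  | step (P : Finset Pt) (b₀ : Pt) (hmax : MaximalRect P (0, 0) b₀)
      (w : Pt) (Q : Finset Pt) (hQ : IsParaPoly Q)
      (heq : P \ intervalCells (0, 0) b₀ = Q.image fun c => c + w)
      (hws : WellShortenable Q) : WellShortenable P

/-- `a` is a join-irreducible element of the finite lattice `L ⊆ ℕ²`
(whose minimum is `(0,0)`). -/
def JoinIrred (L : Finset Pt) (a : Pt) : Prop :=
  a ∈ L ∧ a ≠ (0, 0) ∧ ∀ b ∈ L, ∀ c ∈ L, a = b ⊔ c → a = b ∨ a = c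

/-- `c` is a maximal chain of the subposet `J` of `ℕ²`. -/
def MaxChainIn (J : Set Pt) (c : Set Pt) : Prop :=
  c ⊆ J ∧ IsChain (· ≤ ·) c ∧
  ∀ c', c' ⊆ J → IsChain (· ≤ ·) c' → c ⊆ c' → c = c'

/-- The subposet `J` of `ℕ²` is pure: all its maximal chains have the same length. -/
def PurePoset (J : Set Pt) : Prop :=
  ∀ c₁ c₂, MaxChainIn J c₁ → MaxChainIn J c₂ → c₁.ncard = c₂.ncard

/-- A maximal chain of a simple planar distributive lattice `L`, viewed as a monotone
lattice path of unit steps from `(0,0)` to `max L`. -/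
def IsMaxLatticeChain (L : Finset Pt) (N : ℕ) (c : ℕ → Pt) : Prop :=
  c 0 = (0, 0) ∧ (∀ i ≤ N, c i ∈ L) ∧ (∀ a ∈ L, a ≤ c N) ∧
  ∀ i < N, c (i + 1) = c i + (1, 0) ∨ c (i + 1) = c i + (0, 1)

/-- The chain `c` has a descent at the cell with lower-left corner `a`. -/
def DescentCell (L : Finset Pt) (N : ℕ) (c : ℕ → Pt) (a : Pt) : Prop :=
  cellVerts a ⊆ L ∧
  ∃ s, s + 2 ≤ N ∧ c s = a ∧ c (s + 1) = (a.1 + 1, a.2) ∧ c (s + 2) = (a.1 + 1, a.2 + 1)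

/-- The `i`-th step of the path `f` is a north step. -/
def NorthStep (f : ℕ → Pt) (i : ℕ) : Prop := f (i + 1) = f i + (0, 1)

/-- The `i`-th step of the path `f` is an east step. -/
def EastStep (f : ℕ → Pt) (i : ℕ) : Prop := f (i + 1) = f i + (1, 0)

/-- `[i, i+c)` is a maximal run of steps satisfying `Q` in a path of length `k`. -/
def MaxRun (Q : ℕ → Prop) (k i c : ℕ) : Prop :=
  0 < c ∧ i + c ≤ k ∧ (∀ j, i ≤ j → j < i + c → Q j) ∧
  (i = 0 ∨ ¬ Q (i - 1)) ∧ (i + c = k ∨ ¬ Q (i + c))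

/-- The `i`-th step of the 2-colored Motzkin path associated to the pair of paths
`(u, l)` is a rise step. -/
def RiseStep (u l : ℕ → Pt) (i : ℕ) : Prop := NorthStep u i ∧ EastStep l i

/-- Fall step of the associated 2-colored Motzkin path. -/
def FallStep (u l : ℕ → Pt) (i : ℕ) : Prop := EastStep u i ∧ NorthStep l i

/-- `α`-colored horizontal step of the associated 2-colored Motzkin path. -/
def AlphaStep (u l : ℕ → Pt) (i : ℕ) : Prop := NorthStep u i ∧ NorthStep l i

/-- `β`-colored horizontal step of the associated 2-colored Motzkin path. -/
def BetaStep (u l : ℕ → Pt) (i : ℕ) : Prop := EastStep u i ∧ EastStep l i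

/-- Row convexity of a collection of cells. -/
def RowConvex (P : Finset Pt) : Prop :=
  ∀ i j k : ℕ, (i, j) ∈ P → (k, j) ∈ P → ∀ l, i ≤ l → l ≤ k → (l, j) ∈ P

/-- Column convexity of a collection of cells. -/
def ColConvex (P : Finset Pt) : Prop :=
  ∀ i j k : ℕ, (i, j) ∈ P → (i, k) ∈ P → ∀ l, j ≤ l → l ≤ k → (i, l) ∈ P

/-- `{(r,j),(r+1,j)}` is a horizontal edge of a cell of `P`. -/
def HEdge (P : Finset Pt) (r j : ℕ) : Prop :=
  (r, j) ∈ P ∨ (0 < j ∧ (r, j - 1) ∈ P)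

/-- `{(i,r),(i,r+1)}` is a vertical edge of a cell of `P`. -/
def VEdge (P : Finset Pt) (i r : ℕ) : Prop :=
  (i, r) ∈ P ∨ (0 < i ∧ (i - 1, r) ∈ P)

/-- `[(i,j),(k,j)]` is a maximal horizontal edge interval of `P`. -/
def MaxHInterval (P : Finset Pt) (i k j : ℕ) : Prop :=
  i < k ∧ (∀ r, i ≤ r → r < k → HEdge P r j) ∧
  ∀ i' k', i' < k' → (∀ r, i' ≤ r → r < k' → HEdge P r j) → i' ≤ i → k ≤ k' →
    i' = i ∧ k' = k

/-- `[(i,j),(i,l)]` is a maximal vertical edge interval of `P`. -/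
def MaxVInterval (P : Finset Pt) (i j l : ℕ) : Prop :=
  j < l ∧ (∀ r, j ≤ r → r < l → VEdge P i r) ∧
  ∀ j' l', j' < l' → (∀ r, j' ≤ r → r < l' → VEdge P i r) → j' ≤ j → l ≤ l' →
    j' = j ∧ l' = l

/-- The minima of the maximal horizontal edge intervals of `P`. -/
def HMins (P : Finset Pt) : Set Pt := {a | ∃ k, MaxHInterval P a.1 k a.2}

/-- The minima of the maximal vertical edge intervals of `P`. -/
def VMins (P : Finset Pt) : Set Pt := {a | ∃ l, MaxVInterval P a.1 a.2 l}

lemma abstract_main (V : Finset Pt) (m n : ℕ) (L R : ℕ → ℕ)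
    (hn : 0 < n)
    (hLmono : ∀ s t, s ≤ t → t ≤ n → L s ≤ L t)
    (hRmono : ∀ s t, s ≤ t → t ≤ n → R s ≤ R t)
    (hmem : ∀ p : Pt, p ∈ V ↔ p.2 ≤ n ∧ L p.2 ≤ p.1 ∧ p.1 ≤ R p.2)
    (hL0 : L 0 = 0) (hL1 : L 1 = 0)
    (hRn : R n = m) (hRn1 : R (n - 1) = m)
    (hWidth : ∀ t, t ≤ n → L t + 1 ≤ R t)
    (hOv : ∀ t, t < n → L (t + 1) ≤ R t)
    (hOv2 : ∀ t, 1 ≤ t → t + 1 ≤ n → L (t + 1) + 1 ≤ R (t - 1)) :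
    (∀ a ∈ V, ∀ b ∈ V, a ⊔ b ∈ V ∧ a ⊓ b ∈ V) ∧ IsSPDL V := by
  -- sublattice
  have key : ∀ a ∈ V, ∀ b ∈ V, a.2 ≤ b.2 → a ⊔ b ∈ V ∧ a ⊓ b ∈ V := by
    intro a ha b hb hab
    obtain ⟨han, haL, haR⟩ := (hmem a).mp ha
    obtain ⟨hbn, hbL, hbR⟩ := (hmem b).mp hb
    have hsup2 : (a ⊔ b).2 = b.2 := by
      rw [Prod.snd_sup]; omega
    have hsup1 : (a ⊔ b).1 = a.1 ⊔ b.1 := rfl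
    have hinf2 : (a ⊓ b).2 = a.2 := by
      rw [Prod.snd_inf]; omega
    have hinf1 : (a ⊓ b).1 = a.1 ⊓ b.1 := rfl
    constructor
    · rw [hmem, hsup2, hsup1]
      refine ⟨hbn, le_trans hbL le_sup_right, ?_⟩
      have : R a.2 ≤ R b.2 := hRmono _ _ hab hbn
      exact sup_le (le_trans haR this) hbR
    · rw [hmem, hinf2, hinf1]
      refine ⟨han, le_inf haL ?_, le_trans inf_le_left haR⟩
      exact le_trans (hLmono _ _ hab hbn) hbL
  have hsub : ∀ a ∈ V, ∀ b ∈ V, a ⊔ b ∈ V ∧ a ⊓ b ∈ V := by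
    intro a ha b hb
    rcases le_total a.2 b.2 with h | h
    · exact key a ha b hb h
    · have := key b hb a ha h
      rwa [sup_comm, inf_comm] at this
  have h00 : ((0, 0) : Pt) ∈ V := by
    rw [hmem]; exact ⟨Nat.zero_le _, by simp [hL0], Nat.zero_le _⟩
  have htop : ((m, n) : Pt) ∈ V := by
    rw [hmem]
    refine ⟨le_rfl, ?_, ?_⟩ <;> simp only
    · have := hWidth n le_rfl; omega
    · omega
  have hrank : latRank V = m + n := by
    apply le_antisymm
    · apply Finset.sup_le
      intro p hp
      obtain ⟨hpn, hpL, hpR⟩ := (hmem p).mp hp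
      have : R p.2 ≤ R n := hRmono _ _ hpn le_rfl
      omega
    · have := Finset.le_sup (f := fun a : Pt => a.1 + a.2) htop
      simpa [latRank] using this
  refine ⟨hsub, h00, hsub, ?_, ?_⟩
  · -- unit chains
    intro a ha b hb hab
    obtain ⟨han, haL, haR⟩ := (hmem a).mp ha
    obtain ⟨hbn, hbL, hbR⟩ := (hmem b).mp hb
    have hab1 : a.1 ≤ b.1 := hab.1
    have hab2 : a.2 ≤ b.2 := hab.2
    set f : Pt → Pt := fun p => if b.2 ≤ p.2 ∨ p.1 < L (p.2 + 1) then p + (1, 0) else p + (0, 1) with hf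
    set k : ℕ := (b.1 - a.1) + (b.2 - a.2) with hk
    have hstep : ∀ p : Pt, f p = p + (1, 0) ∨ f p = p + (0, 1) := by
      intro p; rw [hf]; dsimp only; split
      · exact Or.inl rfl
      · exact Or.inr rfl
    have inv : ∀ i, i ≤ k → (f^[i] a) ∈ V ∧ (f^[i] a).1 ≤ b.1 ∧ (f^[i] a).2 ≤ b.2 ∧
        (f^[i] a).1 + (f^[i] a).2 = a.1 + a.2 + i := by
      intro i
      induction i with
      | zero => intro _; simpa using ⟨ha, hab1, hab2⟩
      | succ i ih =>
        intro hik
        obtain ⟨hpV, hp1, hp2, hps⟩ := ih (le_of_lt (Nat.lt_of_succ_le hik))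
        set p : Pt := f^[i] a with hp
        obtain ⟨hpn, hpL, hpR⟩ := (hmem p).mp hpV
        rw [Function.iterate_succ_apply', ← hp]
        have hlt : p.1 + p.2 < b.1 + b.2 := by omega
        rw [hf]; dsimp only
        split
        · rename_i hcond
          have hnew : p + ((1 : ℕ), (0 : ℕ)) = (p.1 + 1, p.2) := by
            simp [Prod.ext_iff]
          rw [hnew]
          have h1b : p.1 + 1 ≤ b.1 := by
            by_cases hc2 : b.2 ≤ p.2
            · omega
            · have hc : p.1 < L (p.2 + 1) := hcond.resolve_left hc2
              have : L (p.2 + 1) ≤ L b.2 := hLmono _ _ (by omega) hbn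
              omega
          have hR' : p.1 + 1 ≤ R p.2 := by
            by_cases hc2 : b.2 ≤ p.2
            · have he : p.2 = b.2 := by omega
              rw [he]; omega
            · have hc : p.1 < L (p.2 + 1) := hcond.resolve_left hc2
              have := hOv p.2 (by omega)
              omega
          refine ⟨(hmem _).mpr ⟨hpn, by simpa using le_trans hpL (Nat.le_succ _), by simpa using hR'⟩, ?_, ?_, ?_⟩ <;> simp <;> omega
        · rename_i hcond
          push_neg at hcond
          obtain ⟨h2lt, hLle⟩ := hcond
          have hnew : p + ((0 : ℕ), (1 : ℕ)) = (p.1, p.2 + 1) := by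
            simp [Prod.ext_iff]
          rw [hnew]
          have hmemnew : (p.1, p.2 + 1) ∈ V := by
            rw [hmem]
            refine ⟨by omega, hLle, le_trans hpR (hRmono _ _ (Nat.le_succ _) (by omega))⟩
          exact ⟨hmemnew, by simpa using hp1, by simpa using h2lt, by simp; omega⟩
    refine ⟨k, fun i => f^[i] a, by simp, ?_, fun i hik => (inv i hik).1, ?_⟩
    · obtain ⟨_, h1, h2, h3⟩ := inv k le_rfl
      have : (f^[k] a).1 = b.1 ∧ (f^[k] a).2 = b.2 := by omega
      exact Prod.ext this.1 this.2
    · intro i _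
      show f^[i + 1] a = f^[i] a + (1, 0) ∨ f^[i + 1] a = f^[i] a + (0, 1)
      rw [Function.iterate_succ_apply']
      exact hstep _
  · -- two elements per rank
    intro r hr hrk
    rw [hrank] at hrk
    set Q : ℕ → Prop := fun t => L t + t ≤ r with hQ
    set t0 : ℕ := Nat.findGreatest Q n with ht0
    have hQ0 : Q 0 := by simp [hQ, hL0]
    have ht0Q : Q t0 := Nat.findGreatest_spec (Nat.zero_le n) hQ0
    have ht0n : t0 ≤ n := Nat.findGreatest_le n
    have ht0R : r ≤ R t0 + t0 := by
      rcases Nat.lt_or_ge t0 n with h | h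
      · have hnot : ¬ Q (t0 + 1) := Nat.findGreatest_is_greatest (Nat.lt_succ_self _) (by omega)
        rw [hQ] at hnot; push_neg at hnot
        have := hOv t0 h
        omega
      · have : t0 = n := by omega
        rw [this, hRn]; omega
    have hmemr : ∀ t, t ≤ n → L t + t ≤ r → r ≤ R t + t → ((r - t, t) : Pt) ∈ V ∧ (r - t) + t = r := by
      intro t h1 h2 h3
      have hLt : 0 ≤ L t := Nat.zero_le _
      refine ⟨(hmem _).mpr ⟨h1, by simp; omega, by simp; omega⟩, by omega⟩
    -- find a second height t1 ≠ t0
    have hsecond : ∃ t1, t1 ≤ n ∧ t1 ≠ t0 ∧ L t1 + t1 ≤ r ∧ r ≤ R t1 + t1 := by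
      rcases Nat.eq_zero_or_pos t0 with h0' | h0'
      · refine ⟨1, by omega, by omega, by rw [hL1]; omega, ?_⟩
        have : R 0 ≤ R 1 := hRmono 0 1 (by omega) (by omega)
        rw [h0'] at ht0R
        omega
      · rcases Nat.lt_or_ge t0 n with hlt | hge
        · -- 0 < t0 < n : use t0 - 1
          have hnot : ¬ Q (t0 + 1) := Nat.findGreatest_is_greatest (Nat.lt_succ_self _) (by omega)
          rw [hQ] at hnot; push_neg at hnot
          have h2 := hOv2 t0 h0' (by omega)
          have hLm : L (t0 - 1) ≤ L t0 := hLmono _ _ (by omega) (by omega)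
          refine ⟨t0 - 1, by omega, by omega, by rw [hQ] at ht0Q; omega, by omega⟩
        · -- t0 = n : use n - 1
          have ht0eq : t0 = n := by omega
          have hQn : L n + n ≤ r := by rw [hQ] at ht0Q; rw [ht0eq] at ht0Q; exact ht0Q
          have hLm : L (n - 1) ≤ L n := hLmono _ _ (by omega) le_rfl
          refine ⟨n - 1, by omega, by omega, by omega, by rw [hRn1]; omega⟩
    obtain ⟨t1, h1n, h1ne, h1L, h1R⟩ := hsecond
    obtain ⟨hp1, hs1⟩ := hmemr t0 ht0n ht0Q ht0R
    obtain ⟨hp2, hs2⟩ := hmemr t1 h1n h1L h1R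
    have hne : ((r - t0, t0) : Pt) ≠ (r - t1, t1) := by
      intro h
      exact h1ne (congrArg Prod.snd h).symm
    apply Finset.one_lt_card.mpr
    exact ⟨(r - t0, t0), Finset.mem_filter.mpr ⟨hp1, hs1⟩, (r - t1, t1),
      Finset.mem_filter.mpr ⟨hp2, hs2⟩, hne⟩


lemma rtg_row_hit {P : Finset Pt} {a b : Pt} {j : ℕ}
    (h : Relation.ReflTransGen
      (fun x y => cellAdj x y ∧ x ∈ (↑P : Set Pt) ∧ y ∈ (↑P : Set Pt)) a b)
    (ha : a ∈ P) (h1 : a.2 ≤ j) (h2 : j ≤ b.2) : ∃ x, ((x, j) : Pt) ∈ P := by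
  revert h2
  induction h with
  | refl =>
    intro h2
    refine ⟨a.1, ?_⟩
    have he : j = a.2 := le_antisymm h2 h1
    rw [he]; simpa using ha
  | @tail b' c h' step ih =>
    intro h2
    obtain ⟨hadj, hb'P, hcP⟩ := step
    by_cases hj : j ≤ b'.2
    · exact ih hj
    · push_neg at hj
      have hc2 : c.2 = j := by
        rcases hadj with ⟨h1', h2'⟩ | ⟨h1', h2'⟩ <;> omega
      refine ⟨c.1, ?_⟩
      rw [← hc2]; simpa using hcP

lemma rtg_cross {P : Finset Pt} {a b : Pt} {j : ℕ}
    (h : Relation.ReflTransGen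
      (fun x y => cellAdj x y ∧ x ∈ (↑P : Set Pt) ∧ y ∈ (↑P : Set Pt)) a b)
    (h1 : a.2 ≤ j) (h2 : j < b.2) :
    ∃ i, ((i, j) : Pt) ∈ P ∧ ((i, j + 1) : Pt) ∈ P := by
  revert h2
  induction h with
  | refl => intro h2; exact absurd (lt_of_le_of_lt h1 h2) (lt_irrefl _)
  | @tail b' c h' step ih =>
    intro h2
    obtain ⟨hadj, hb'P, hcP⟩ := step
    by_cases hj : j < b'.2
    · exact ih hj
    · push_neg at hj
      rcases hadj with ⟨he, hv⟩ | ⟨he, hv⟩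
      · have hb2 : b'.2 = j := by omega
        have hc2 : c.2 = j + 1 := by omega
        refine ⟨b'.1, ?_, ?_⟩
        · rw [← hb2]; simpa using hb'P
        · rw [← hc2, he]; simpa using hcP
      · omega

lemma mem_cellVerts_iff (v a : Pt) :
    v ∈ cellVerts a ↔ v = a ∨ v = (a.1 + 1, a.2) ∨ v = (a.1, a.2 + 1) ∨ v = (a.1 + 1, a.2 + 1) := by
  simp [cellVerts]

lemma mem_vertexSet_iff (P : Finset Pt) (p : Pt) :
    p ∈ vertexSet P ↔ ∃ a ∈ P, p ∈ cellVerts a := by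
  rw [vertexSet, Finset.mem_biUnion]

-- STATEMENT 1
theorem stmt1 (P : Finset Pt) (m n : ℕ)
    (hpoly : IsPolyomino P) (hrow : RowConvex P) (hcol : ColConvex P)
    (hbound : ∀ c ∈ P, c.1 < m ∧ c.2 < n)
    (hm : ∃ c ∈ P, c.1 + 1 = m) (hn : ∃ c ∈ P, c.2 + 1 = n)
    (hx0 : ∃ c ∈ P, c.1 = 0) (hy0 : ∃ c ∈ P, c.2 = 0)
    (h0 : (0, 0) ∈ vertexSet P) (hmn : (m, n) ∈ vertexSet P) :
    (∀ a ∈ vertexSet P, ∀ b ∈ vertexSet P,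
      a ⊔ b ∈ vertexSet P ∧ a ⊓ b ∈ vertexSet P) ∧
    IsSPDL (vertexSet P) := by
  obtain ⟨hne, hconn⟩ := hpoly
  obtain ⟨cm, hcmP, hcm⟩ := hm
  obtain ⟨cn, hcnP, hcn⟩ := hn
  have hm1 : 1 ≤ m := by omega
  have hn1 : 1 ≤ n := by omega
  have hP00 : ((0, 0) : Pt) ∈ P := by
    obtain ⟨a, haP, hav⟩ := (mem_vertexSet_iff P _).mp h0
    rw [mem_cellVerts_iff] at hav
    have ha : a = ((0, 0) : Pt) := by
      rcases hav with h | h | h | h <;>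
        · rw [Prod.ext_iff] at h ⊢; simp at h ⊢; try omega
    rwa [ha] at haP
  have hPmn : ((m - 1, n - 1) : Pt) ∈ P := by
    obtain ⟨a, haP, hav⟩ := (mem_vertexSet_iff P _).mp hmn
    rw [mem_cellVerts_iff] at hav
    obtain ⟨hb1, hb2⟩ := hbound a haP
    have ha : a = ((m - 1, n - 1) : Pt) := by
      rcases hav with h | h | h | h <;>
        · rw [Prod.ext_iff] at h ⊢; simp at h ⊢; try omega
    rwa [ha] at haP
  have hrowne : ∀ j, j < n → ∃ x, ((x, j) : Pt) ∈ P := by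
    intro j hj
    refine rtg_row_hit (hconn (0, 0) (by simpa using hP00) (m - 1, n - 1)
      (by simpa using hPmn)) hP00 (by simp) (by simp; omega)
  classical
  set S : ℕ → Set ℕ := fun j => {x | ((x, j) : Pt) ∈ P} with hS
  set l : ℕ → ℕ := fun j => sInf (S j) with hldef
  set r : ℕ → ℕ := fun j => sSup (S j) with hrdef
  have hSne : ∀ j, j < n → (S j).Nonempty := fun j hj => hrowne j hj
  have hSbdd : ∀ j, BddAbove (S j) := fun j => ⟨m, fun x hx => le_of_lt (hbound _ hx).1⟩
  have hlP : ∀ j, j < n → ((l j, j) : Pt) ∈ P := fun j hj => Nat.sInf_mem (hSne j hj)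
  have hrP : ∀ j, j < n → ((r j, j) : Pt) ∈ P := fun j hj => Nat.sSup_mem (hSne j hj) (hSbdd j)
  have hlle : ∀ x j, ((x, j) : Pt) ∈ P → l j ≤ x := fun x j hx => Nat.sInf_le hx
  have hrge : ∀ x j, ((x, j) : Pt) ∈ P → x ≤ r j := fun x j hx => le_csSup (hSbdd j) hx
  have hrowmem : ∀ x j, j < n → (((x, j) : Pt) ∈ P ↔ l j ≤ x ∧ x ≤ r j) := by
    intro x j hj
    constructor
    · exact fun h => ⟨hlle x j h, hrge x j h⟩
    · rintro ⟨h1, h2⟩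
      exact hrow (l j) j (r j) (hlP j hj) (hrP j hj) x h1 h2
  have hrbd : ∀ j, j < n → r j < m := fun j hj => (hbound _ (hrP j hj)).1
  have hl0 : l 0 = 0 := Nat.le_zero.mp (hlle 0 0 hP00)
  have hrn1 : r (n - 1) = m - 1 := by
    have h1 := hrge (m - 1) (n - 1) hPmn
    have h2 := hrbd (n - 1) (by omega)
    omega
  have hov : ∀ j, j + 1 < n → l (j + 1) ≤ r j ∧ l j ≤ r (j + 1) := by
    intro j hj
    obtain ⟨i, hij, hij1⟩ := rtg_cross (hconn (l j, j) (by simpa using hlP j (by omega))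
      (l (j + 1), j + 1) (by simpa using hlP (j + 1) hj)) (le_refl j) (Nat.lt_succ_self j)
    exact ⟨le_trans (hlle i (j + 1) hij1) (hrge i j hij),
      le_trans (hlle i j hij) (hrge i (j + 1) hij1)⟩
  have hrmono1 : ∀ j, j + 1 < n → r j ≤ r (j + 1) := by
    intro j hj
    by_contra hcon
    push_neg at hcon
    have colempty : ∀ t, j < t → t < n → ((r j, t) : Pt) ∉ P := by
      intro t h1 h2 hc
      have h3 : ((r j, j + 1) : Pt) ∈ P :=
        hcol (r j) j t (hrP j (by omega)) hc (j + 1) (by omega) (by omega)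
      have := hrge (r j) (j + 1) h3
      omega
    have hex : ∃ t, j + 1 ≤ t ∧ t < n ∧ r j ≤ r t :=
      ⟨n - 1, by omega, by omega, by rw [hrn1]; have := hrbd j (by omega); omega⟩
    obtain ⟨h1, h2, h3⟩ := Nat.find_spec hex
    set t0 := Nat.find hex with ht0
    have hne' : t0 ≠ j + 1 := by intro h; rw [h] at h3; omega
    have hprev : ¬ (j + 1 ≤ t0 - 1 ∧ t0 - 1 < n ∧ r j ≤ r (t0 - 1)) :=
      Nat.find_min hex (by omega)
    have hrprev : r (t0 - 1) < r j := by
      by_contra h; push_neg at h; exact hprev ⟨by omega, by omega, h⟩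
    have hovt := (hov (t0 - 1) (by omega)).1
    have hlr : l t0 ≤ r (t0 - 1) := by
      have heq : t0 - 1 + 1 = t0 := by omega
      rwa [heq] at hovt
    have : ((r j, t0) : Pt) ∈ P := (hrowmem (r j) t0 h2).mpr ⟨by omega, h3⟩
    exact colempty t0 (by omega) h2 this
  have hlmono1 : ∀ j, j + 1 < n → l j ≤ l (j + 1) := by
    intro j hj
    by_contra hcon
    push_neg at hcon
    have colempty : ∀ t, t ≤ j → ((l (j + 1), t) : Pt) ∉ P := by
      intro t h1 hc
      have h3 : ((l (j + 1), j) : Pt) ∈ P :=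
        hcol (l (j + 1)) t (j + 1) hc (hlP (j + 1) hj) j (by omega) (by omega)
      have := hlle (l (j + 1)) j h3
      omega
    have hQ0 : l 0 ≤ l (j + 1) := by rw [hl0]; omega
    set t0 := Nat.findGreatest (fun t => l t ≤ l (j + 1)) j with ht0
    have ht0Q : l t0 ≤ l (j + 1) :=
      Nat.findGreatest_spec (P := fun t => l t ≤ l (j + 1)) (Nat.zero_le j) hQ0
    have ht0j : t0 ≤ j := Nat.findGreatest_le j
    have hrt0 : r t0 < l (j + 1) := by
      by_contra h; push_neg at h
      exact colempty t0 ht0j ((hrowmem (l (j + 1)) t0 (by omega)).mpr ⟨ht0Q, h⟩)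
    rcases Nat.lt_or_ge t0 j with hlt | hge
    · have hnot : ¬ l (t0 + 1) ≤ l (j + 1) :=
        Nat.findGreatest_is_greatest (P := fun t => l t ≤ l (j + 1))
          (by rw [← ht0]; exact Nat.lt_succ_self _) (by omega)
      have := (hov t0 (by omega)).1
      omega
    · have heq : t0 = j := by omega
      have := (hov j hj).1
      rw [heq] at hrt0
      omega
  have hrmonoD : ∀ d j, j + d < n → r j ≤ r (j + d) := by
    intro d
    induction d with
    | zero => intro j _; simp
    | succ d ih =>
      intro j h
      have h1 : r j ≤ r (j + d) := ih j (by omega)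
      have h2 : r (j + d) ≤ r (j + d + 1) := hrmono1 (j + d) (by omega)
      have heq : j + (d + 1) = j + d + 1 := rfl
      rw [heq]; omega
  have hlmonoD : ∀ d j, j + d < n → l j ≤ l (j + d) := by
    intro d
    induction d with
    | zero => intro j _; simp
    | succ d ih =>
      intro j h
      have h1 : l j ≤ l (j + d) := ih j (by omega)
      have h2 : l (j + d) ≤ l (j + d + 1) := hlmono1 (j + d) (by omega)
      have heq : j + (d + 1) = j + d + 1 := rfl
      rw [heq]; omega
  have hrmono : ∀ s t, s ≤ t → t < n → r s ≤ r t := by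
    intro s t h1 h2
    have := hrmonoD (t - s) s (by omega)
    rwa [Nat.add_sub_cancel' h1] at this
  have hlmono : ∀ s t, s ≤ t → t < n → l s ≤ l t := by
    intro s t h1 h2
    have := hlmonoD (t - s) s (by omega)
    rwa [Nat.add_sub_cancel' h1] at this
  have hlr : ∀ j, j < n → l j ≤ r j := fun j hj => hrge (l j) j (hlP j hj)
  -- apply the abstract lemma
  apply abstract_main (vertexSet P) m n (fun t => l (t - 1)) (fun t => r (min t (n - 1)) + 1)
  · omega
  · intro s t hst htn
    exact hlmono (s - 1) (t - 1) (by omega) (by omega)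
  · intro s t hst htn
    exact Nat.add_le_add_right (hrmono (min s (n - 1)) (min t (n - 1)) (by omega) (by omega)) 1
  · -- membership characterization
    rintro ⟨x, t⟩
    constructor
    · intro hp
      obtain ⟨a, haP, hav⟩ := (mem_vertexSet_iff P _).mp hp
      rw [mem_cellVerts_iff] at hav
      have hgen : ∀ e1 e2 : ℕ, e1 ≤ 1 → e2 ≤ 1 → x = a.1 + e1 → t = a.2 + e2 →
          t ≤ n ∧ l (t - 1) ≤ x ∧ x ≤ r (min t (n - 1)) + 1 := by
        intro e1 e2 he1 he2 hx ht
        have haN : a.2 < n := (hbound a haP).2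
        have hal : l a.2 ≤ a.1 := hlle _ _ (by simpa using haP)
        have har : a.1 ≤ r a.2 := hrge _ _ (by simpa using haP)
        refine ⟨by omega, ?_, ?_⟩
        · have := hlmono (t - 1) a.2 (by omega) haN
          omega
        · have := hrmono a.2 (min t (n - 1)) (by omega) (by omega)
          omega
      rcases hav with h | h | h | h <;> rw [Prod.ext_iff] at h <;> simp at h
      · exact hgen 0 0 (by omega) (by omega) (by omega) (by omega)
      · exact hgen 1 0 (by omega) (by omega) (by omega) (by omega)
      · exact hgen 0 1 (by omega) (by omega) (by omega) (by omega)
      · exact hgen 1 1 (by omega) (by omega) (by omega) (by omega)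
    · rintro ⟨htn, hLx, hxR⟩
      simp only at htn hLx hxR
      rw [mem_vertexSet_iff]
      rcases Nat.eq_zero_or_pos t with ht0 | ht1
      · subst ht0
        have hmin : min 0 (n - 1) = 0 := by omega
        rw [hmin] at hxR
        by_cases hxr : x ≤ r 0
        · refine ⟨(x, 0), (hrowmem x 0 (by omega)).mpr ⟨by simpa using hLx, hxr⟩, ?_⟩
          rw [mem_cellVerts_iff]; left; rfl
        · have hxe : x = r 0 + 1 := by omega
          refine ⟨(r 0, 0), hrP 0 (by omega), ?_⟩
          rw [mem_cellVerts_iff]; right; left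
          rw [Prod.ext_iff]; exact ⟨hxe, rfl⟩
      · rcases Nat.lt_or_ge t n with htn' | htn'
        · have hmin : min t (n - 1) = t := by omega
          rw [hmin] at hxR
          by_cases hlt : l t ≤ x
          · by_cases hxr : x ≤ r t
            · refine ⟨(x, t), (hrowmem x t htn').mpr ⟨hlt, hxr⟩, ?_⟩
              rw [mem_cellVerts_iff]; left; rfl
            · have hxe : x = r t + 1 := by omega
              refine ⟨(r t, t), hrP t htn', ?_⟩
              rw [mem_cellVerts_iff]; right; left
              rw [Prod.ext_iff]; exact ⟨hxe, rfl⟩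
          · push_neg at hlt
            have hov' := (hov (t - 1) (by omega)).1
            have heq : t - 1 + 1 = t := by omega
            rw [heq] at hov'
            refine ⟨(x, t - 1), (hrowmem x (t - 1) (by omega)).mpr ⟨hLx, by omega⟩, ?_⟩
            rw [mem_cellVerts_iff]; right; right; left
            rw [Prod.ext_iff]; exact ⟨rfl, by simp; omega⟩
        · have hte : t = n := by omega
          rw [hte] at hLx hxR ⊢
          have hmin : min n (n - 1) = n - 1 := by omega
          rw [hmin] at hxR
          by_cases hxr : x ≤ r (n - 1)
          · refine ⟨(x, n - 1), (hrowmem x (n - 1) (by omega)).mpr ⟨hLx, hxr⟩, ?_⟩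
            rw [mem_cellVerts_iff]; right; right; left
            rw [Prod.ext_iff]; exact ⟨rfl, by simp; omega⟩
          · have hxe : x = r (n - 1) + 1 := by omega
            refine ⟨(r (n - 1), n - 1), hrP (n - 1) (by omega), ?_⟩
            rw [mem_cellVerts_iff]; right; right; right
            rw [Prod.ext_iff]; exact ⟨hxe, by simp; omega⟩
  · simpa using hl0
  · simpa using hl0
  · have hmin : min n (n - 1) = n - 1 := by omega
    rw [hmin, hrn1]; omega
  · have hmin : min (n - 1) (n - 1) = n - 1 := min_self _
    rw [hmin, hrn1]; omega
  · intro t htn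
    have h1 : l (t - 1) ≤ r (t - 1) := hlr (t - 1) (by omega)
    have h2 : r (t - 1) ≤ r (min t (n - 1)) := hrmono (t - 1) (min t (n - 1)) (by omega) (by omega)
    omega
  · intro t htn
    have hmin : min t (n - 1) = t := by omega
    have h1 : l (t + 1 - 1) ≤ r t := by
      have : t + 1 - 1 = t := by omega
      rw [this]; exact hlr t htn
    rw [hmin]; omega
  · intro t ht1 htn
    have hmin : min (t - 1) (n - 1) = t - 1 := by omega
    have heq : t + 1 - 1 = t := by omega
    have hov' := (hov (t - 1) (by omega)).1
    have heq2 : t - 1 + 1 = t := by omega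
    rw [heq2] at hov'
    rw [hmin, heq]
    omega
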